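/- arXiv:1211.3605 — 2 statements merged into one kernel-verified Lean document; each statement's English description precedes it below -/
import Mathlib

section
/- Let A : ℝ → gl_n(ℝ) be a differentiable curve satisfying A' = -tr(S(A)²)·A + (1/2)[A,[A,Aᵗ]] - (1/2)tr(A)·[A,Aᵗ]. Then (d/dt)tr(S(A)²) = -2·tr(S(A)²)² - (1/2)‖[A,Aᵗ]‖² ≤ 0. -/
open Matrix Filter

noncomputable section

abbrev Mat (n : ℕ) := Matrix (Fin n) (Fin n) ℝ

/-- Commutator bracket of matrices. -/
def bkt {n : ℕ} (X Y : Mat n) : Mat n := X * Y - Y * X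

/-- Frobenius inner product ⟨X,Y⟩ = tr(XYᵗ). -/
def frob {n : ℕ} (X Y : Mat n) : ℝ := Matrix.trace (X * Yᵀ)

/-- Squared Frobenius norm ‖X‖² = tr(XXᵗ). -/
def sqnorm {n : ℕ} (X : Mat n) : ℝ := frob X X

/-- Symmetric part S(X) = (X+Xᵗ)/2. -/
def symPart {n : ℕ} (X : Mat n) : Mat n := (1/2 : ℝ) • (X + Xᵀ)

/-- Right-hand side of the bracket flow ODE. -/
def rhs {n : ℕ} (A : Mat n) : Mat n :=
  (-(Matrix.trace (symPart A * symPart A))) • A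
    + (1/2 : ℝ) • bkt A (bkt A Aᵀ)
    - ((1/2 : ℝ) * Matrix.trace A) • bkt A Aᵀ

lemma symPart_transpose {n : ℕ} (B : Mat n) : (symPart B)ᵀ = symPart B := by
  simp [symPart, transpose_add, add_comm]

lemma bkt_transpose {n : ℕ} (B : Mat n) : (bkt B Bᵀ)ᵀ = bkt B Bᵀ := by
  simp [bkt, transpose_sub, transpose_mul]

lemma trace_symPart_mul {n : ℕ} (X S : Mat n) (hS : Sᵀ = S) :
    Matrix.trace (symPart X * S) = Matrix.trace (X * S) := by
  have h : Matrix.trace (Xᵀ * S) = Matrix.trace (X * S) := by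
    rw [← Matrix.trace_transpose (Xᵀ * S), transpose_mul, transpose_transpose, hS,
      Matrix.trace_mul_comm]
  simp [symPart, add_mul, smul_mul_assoc, Matrix.trace_add, h]
  ring

lemma comm_symPart {n : ℕ} (B : Mat n) :
    symPart B * B - B * symPart B = (-(1/2) : ℝ) • bkt B Bᵀ := by
  simp only [symPart, bkt, add_mul, mul_add, smul_mul_assoc, mul_smul_comm, smul_sub, smul_add]
  module

lemma trace_bkt_symPart {n : ℕ} (B : Mat n) :
    Matrix.trace (bkt B Bᵀ * symPart B) = 0 := by
  have h1 : Matrix.trace ((B * Bᵀ) * B) = Matrix.trace ((Bᵀ * B) * B) :=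
    (Matrix.trace_mul_cycle Bᵀ B B).symm
  have h2 : Matrix.trace ((B * Bᵀ) * Bᵀ) = Matrix.trace ((Bᵀ * B) * Bᵀ) :=
    Matrix.trace_mul_cycle B Bᵀ Bᵀ
  simp only [bkt, symPart, mul_smul_comm, sub_mul, mul_add, Matrix.trace_smul, Matrix.trace_sub,
    Matrix.trace_add, smul_eq_mul, h1, h2]
  ring

lemma trace_bkt2_symPart {n : ℕ} (B : Mat n) :
    Matrix.trace (bkt B (bkt B Bᵀ) * symPart B)
      = -(1/2) * sqnorm (bkt B Bᵀ) := by
  set T := bkt B Bᵀ with hT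
  set S := symPart B with hS
  have e1 : Matrix.trace ((B * T) * S) = Matrix.trace (T * (S * B)) := by
    rw [Matrix.trace_mul_comm (B * T) S, ← mul_assoc, Matrix.trace_mul_comm (S * B) T]
  have e2 : Matrix.trace ((T * B) * S) = Matrix.trace (T * (B * S)) := by
    rw [mul_assoc]
  have e3 : Matrix.trace (T * (S * B)) - Matrix.trace (T * (B * S))
      = Matrix.trace (T * (S * B - B * S)) := by
    rw [mul_sub, Matrix.trace_sub]
  have e4 : S * B - B * S = (-(1/2) : ℝ) • T := comm_symPart B
  have e5 : Matrix.trace (T * Tᵀ) = sqnorm T := rfl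
  calc Matrix.trace (bkt B T * S)
      = Matrix.trace (T * (S * B - B * S)) := by
        rw [← e3, ← e1, ← e2, bkt, sub_mul, Matrix.trace_sub]
    _ = -(1/2) * Matrix.trace (T * T) := by
        rw [e4, mul_smul_comm, Matrix.trace_smul]; simp
    _ = -(1/2) * sqnorm T := by rw [← e5, bkt_transpose]

lemma trace_B_symPart {n : ℕ} (B : Mat n) :
    Matrix.trace (B * symPart B) = Matrix.trace (symPart B * symPart B) := by
  rw [trace_symPart_mul B (symPart B) (symPart_transpose B)]

lemma key {n : ℕ} (B : Mat n) :
    2 * Matrix.trace (symPart (rhs B) * symPart B)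
      = -2 * (Matrix.trace (symPart B * symPart B)) ^ 2
        - (1/2) * sqnorm (bkt B Bᵀ) := by
  rw [trace_symPart_mul _ _ (symPart_transpose B)]
  rw [rhs]
  simp only [sub_mul, add_mul, smul_mul_assoc, Matrix.trace_sub, Matrix.trace_add,
    Matrix.trace_smul, smul_eq_mul, trace_bkt_symPart, trace_bkt2_symPart, trace_B_symPart]
  ring

lemma sqnorm_nonneg {n : ℕ} (X : Mat n) : 0 ≤ sqnorm X := by
  have : sqnorm X = ∑ i, ∑ j, X i j ^ 2 := by
    simp [sqnorm, frob, Matrix.trace, Matrix.mul_apply, Matrix.diag, sq]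
  rw [this]
  positivity

theorem stmt10 {n : ℕ} (A : ℝ → Mat n)
    (hA : ∀ t : ℝ, ∀ i j, HasDerivAt (fun s => A s i j) (rhs (A t) i j) t) :
    ∀ t : ℝ,
      HasDerivAt (fun s => Matrix.trace (symPart (A s) * symPart (A s)))
        (-2 * (Matrix.trace (symPart (A t) * symPart (A t))) ^ 2
          - (1/2) * sqnorm (bkt (A t) (A t)ᵀ)) t ∧
      -2 * (Matrix.trace (symPart (A t) * symPart (A t))) ^ 2
          - (1/2) * sqnorm (bkt (A t) (A t)ᵀ) ≤ 0 := by
  intro t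
  constructor
  · have hd : HasDerivAt
        (fun s => ∑ i, ∑ j,
          ((1/2 : ℝ) * (A s i j + A s j i)) * ((1/2 : ℝ) * (A s j i + A s i j)))
        (∑ i, ∑ j,
          (((1/2 : ℝ) * (rhs (A t) i j + rhs (A t) j i))
              * ((1/2 : ℝ) * (A t j i + A t i j))
            + ((1/2 : ℝ) * (A t i j + A t j i))
              * ((1/2 : ℝ) * (rhs (A t) j i + rhs (A t) i j)))) t := by
      apply HasDerivAt.fun_sum; intro i _; apply HasDerivAt.fun_sum; intro j _
      exact (((hA t i j).add (hA t j i)).const_mul _).mul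
        (((hA t j i).add (hA t i j)).const_mul _)
    have hfun : (fun s => Matrix.trace (symPart (A s) * symPart (A s)))
        = (fun s => ∑ i, ∑ j,
            ((1/2 : ℝ) * (A s i j + A s j i)) * ((1/2 : ℝ) * (A s j i + A s i j))) := by
      funext s
      simp only [symPart, Matrix.trace, Matrix.mul_apply, Matrix.diag, Matrix.smul_apply,
        Matrix.add_apply, Matrix.transpose_apply, smul_eq_mul]
    have hD : (∑ i, ∑ j,
          (((1/2 : ℝ) * (rhs (A t) i j + rhs (A t) j i))
              * ((1/2 : ℝ) * (A t j i + A t i j))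
            + ((1/2 : ℝ) * (A t i j + A t j i))
              * ((1/2 : ℝ) * (rhs (A t) j i + rhs (A t) i j))))
        = 2 * Matrix.trace (symPart (rhs (A t)) * symPart (A t)) := by
      have h2 : 2 * Matrix.trace (symPart (rhs (A t)) * symPart (A t))
          = ∑ i, ∑ j, 2 * (symPart (rhs (A t)) i j * symPart (A t) j i) := by
        simp [Matrix.trace, Matrix.mul_apply, Matrix.diag, Finset.mul_sum]
      rw [h2]
      refine Finset.sum_congr rfl fun i _ => Finset.sum_congr rfl fun j _ => ?_
      simp [symPart]
      ring
    rw [hfun]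
    rw [hD, key] at hd
    exact hd
  · nlinarith [sqnorm_nonneg (bkt (A t) (A t)ᵀ),
      sq_nonneg (Matrix.trace (symPart (A t) * symPart (A t)))]
end
end

section
/- Let A : ℝ → gl_n(ℝ) satisfy A' = -tr(S(A)²)·A + (1/2)[A,[A,Aᵗ]] - (1/2)tr(A)·[A,Aᵗ], with A(t) ≠ 0 for all t, and let B(t) = A(t)/‖A(t)‖. Then B satisfies B' = (‖A‖²/2)·([B,[B,Bᵗ]] - tr(B)·[B,Bᵗ] + ‖[B,Bᵗ]‖²·B). -/
open Matrix Filter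

noncomputable section

lemma frob_eq_sum {n : ℕ} (X Y : Mat n) : frob X Y = ∑ i, ∑ j, X i j * Y i j := by
  simp [frob, Matrix.trace, Matrix.diag, Matrix.mul_apply, Matrix.transpose_apply]

lemma sqnorm_pos {n : ℕ} {X : Mat n} (h : X ≠ 0) : 0 < sqnorm X := by
  obtain ⟨i, j, hij⟩ : ∃ i j, X i j ≠ 0 := by
    by_contra hc; push_neg at hc; exact h (by ext i j; simp [hc])
  rw [show sqnorm X = frob X X from rfl, frob_eq_sum]
  have h1 : (0:ℝ) < ∑ j', X i j' * X i j' :=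
    Finset.sum_pos' (fun k _ => mul_self_nonneg _)
      ⟨j, Finset.mem_univ j, mul_self_pos.mpr hij⟩
  exact Finset.sum_pos' (fun k _ => Finset.sum_nonneg fun l _ => mul_self_nonneg _)
    ⟨i, Finset.mem_univ i, h1⟩

lemma bkt_symm_transpose {n : ℕ} (X : Mat n) : (bkt X Xᵀ)ᵀ = bkt X Xᵀ := by
  simp [bkt, transpose_sub, transpose_mul]

lemma frob_A_C {n : ℕ} (X : Mat n) : frob X (bkt X Xᵀ) = 0 := by
  rw [frob, bkt_symm_transpose, bkt, mul_sub, trace_sub]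
  rw [← mul_assoc, ← mul_assoc, Matrix.trace_mul_cycle X Xᵀ X]
  ring

lemma frob_A_AC {n : ℕ} (X : Mat n) :
    frob X (bkt X (bkt X Xᵀ)) = - sqnorm (bkt X Xᵀ) := by
  set C := bkt X Xᵀ with hC
  have hCt : Cᵀ = C := bkt_symm_transpose X
  rw [frob, show bkt X C = X * C - C * X from rfl, transpose_sub, transpose_mul, transpose_mul,
    hCt, mul_sub, trace_sub]
  have h1 : Matrix.trace (X * (C * Xᵀ)) = Matrix.trace (Xᵀ * X * C) := by
    rw [← mul_assoc, Matrix.trace_mul_cycle]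
  have h2 : Matrix.trace (X * (Xᵀ * C)) = Matrix.trace (X * Xᵀ * C) := by
    rw [← mul_assoc]
  rw [h1, h2, sqnorm, frob, hCt]
  rw [← trace_sub, ← sub_mul]
  have hXX : Xᵀ * X - X * Xᵀ = -C := by rw [hC]; simp [bkt]
  rw [hXX, neg_mul, trace_neg]

lemma frob_add {n : ℕ} (X Y Z : Mat n) : frob X (Y + Z) = frob X Y + frob X Z := by
  simp [frob, transpose_add, mul_add]

lemma frob_sub {n : ℕ} (X Y Z : Mat n) : frob X (Y - Z) = frob X Y - frob X Z := by
  simp [frob, transpose_sub, mul_sub]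

lemma frob_smul {n : ℕ} (a : ℝ) (X Y : Mat n) : frob X (a • Y) = a * frob X Y := by
  simp [frob, transpose_smul, mul_smul_comm]

lemma frob_rhs {n : ℕ} (X : Mat n) :
    frob X (rhs X) = -(Matrix.trace (symPart X * symPart X)) * sqnorm X
      - (1/2) * sqnorm (bkt X Xᵀ) := by
  rw [rhs, frob_sub, frob_add, frob_smul, frob_smul, frob_smul, frob_A_C, frob_A_AC]
  simp only [sqnorm]; ring

lemma bkt_smul_smul {n : ℕ} (a b : ℝ) (X Y : Mat n) :
    bkt (a • X) (b • Y) = (a * b) • bkt X Y := by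
  simp [bkt, smul_smul, smul_sub, smul_mul_assoc, mul_smul_comm, mul_comm]

lemma sqnorm_smul {n : ℕ} (a : ℝ) (X : Mat n) : sqnorm (a • X) = a ^ 2 * sqnorm X := by
  simp [sqnorm, frob, transpose_smul, smul_mul_assoc, mul_smul_comm, smul_smul, sq]

lemma hasDerivAt_sqnorm {n : ℕ} (A : ℝ → Mat n)
    (hA : ∀ t : ℝ, ∀ i j, HasDerivAt (fun s => A s i j) (rhs (A t) i j) t) (t : ℝ) :
    HasDerivAt (fun s => sqnorm (A s)) (2 * frob (A t) (rhs (A t))) t := by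
  have h : HasDerivAt (fun s => ∑ p : Fin n, ∑ q : Fin n, A s p q * A s p q)
      (∑ p : Fin n, ∑ q : Fin n, (rhs (A t) p q * A t p q + A t p q * rhs (A t) p q)) t :=
    HasDerivAt.fun_sum (fun p _ => HasDerivAt.fun_sum (fun q _ => ((hA t p q).mul (hA t p q))))
  have e1 : (fun s => sqnorm (A s)) = (fun s => ∑ p : Fin n, ∑ q : Fin n, A s p q * A s p q) := by
    funext s; rw [show sqnorm (A s) = frob (A s) (A s) from rfl, frob_eq_sum]
  rw [e1]
  convert h using 1
  rw [frob_eq_sum, Finset.mul_sum]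
  refine Finset.sum_congr rfl fun p _ => ?_
  rw [Finset.mul_sum]
  exact Finset.sum_congr rfl fun q _ => by ring

theorem stmt15 {n : ℕ} (A : ℝ → Mat n)
    (hA : ∀ t : ℝ, ∀ i j, HasDerivAt (fun s => A s i j) (rhs (A t) i j) t)
    (hne : ∀ t : ℝ, A t ≠ 0)
    (B : ℝ → Mat n) (hB : ∀ t, B t = (Real.sqrt (sqnorm (A t)))⁻¹ • A t) :
    ∀ t : ℝ, ∀ i j, HasDerivAt (fun s => B s i j)
      (((sqnorm (A t) / 2) •
        (bkt (B t) (bkt (B t) (B t)ᵀ)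
          - Matrix.trace (B t) • bkt (B t) (B t)ᵀ
          + sqnorm (bkt (B t) (B t)ᵀ) • B t)) i j) t := by
  intro t i j
  have hrpos : 0 < sqnorm (A t) := sqnorm_pos (hne t)
  have hu : 0 < Real.sqrt (sqnorm (A t)) := Real.sqrt_pos.mpr hrpos
  set u : ℝ := Real.sqrt (sqnorm (A t)) with huu
  have hu2 : u ^ 2 = sqnorm (A t) := Real.sq_sqrt hrpos.le
  have hg := hasDerivAt_sqnorm A hA t
  have hsq : HasDerivAt (fun s => Real.sqrt (sqnorm (A s)))
      (1 / (2 * u) * (2 * frob (A t) (rhs (A t)))) t :=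
    (Real.hasDerivAt_sqrt hrpos.ne').comp t hg
  have hinv : HasDerivAt (fun s => (Real.sqrt (sqnorm (A s)))⁻¹)
      (-(1 / (2 * u) * (2 * frob (A t) (rhs (A t)))) / u ^ 2) t := hsq.inv hu.ne'
  have hmul := hinv.mul (hA t i j)
  have heq : (fun s => B s i j) = fun s => (Real.sqrt (sqnorm (A s)))⁻¹ * A s i j := by
    funext s; rw [hB s]; simp [Matrix.smul_apply, smul_eq_mul]
  rw [heq]
  convert hmul using 1
  case e'_4 => rfl
  case e'_5 => rfl
  case e'_8 => rfl
  have hbb : bkt (B t) (B t)ᵀ = (u⁻¹ * u⁻¹) • bkt (A t) (A t)ᵀ := by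
    rw [hB t, transpose_smul, bkt_smul_smul]
  have hbbb : bkt (B t) (bkt (B t) (B t)ᵀ) =
      (u⁻¹ * (u⁻¹ * u⁻¹)) • bkt (A t) (bkt (A t) (A t)ᵀ) := by
    rw [hbb, hB t, bkt_smul_smul]
  have htr : Matrix.trace (B t) = u⁻¹ * Matrix.trace (A t) := by rw [hB t]; simp; exact Or.inl rfl
  have hsn : sqnorm (bkt (B t) (B t)ᵀ) = (u⁻¹ * u⁻¹) ^ 2 * sqnorm (bkt (A t) (A t)ᵀ) := by
    rw [hbb, sqnorm_smul]
  rw [hbbb, htr, hsn, hbb, hB t, frob_rhs]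
  rw [← hu2]
  simp only [rhs, Matrix.smul_apply, Matrix.sub_apply, Matrix.add_apply, smul_eq_mul]
  field_simp
  rw [Real.sqrt_sq hu.le]
  ring
end
end
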